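/- Fix τ > 0 and a real number a. For σ > 0 large enough that 2^{1/3}z − (1 + 2^{−1/3})σ + 2^{−1/3}a ≥ 0 for all z ≥ 2^{2/3}σ, define f_σ(z) := exp( τ(2^{1/3}z − σ) − (2/3)·( 2^{1/3}z − (1 + 2^{−1/3})σ + 2^{−1/3}a )^{3/2} ) for z ≥ 2^{2/3}σ. Then the squared L² norm of f_σ on [2^{2/3}σ, ∞) tends to zero as σ → +∞, i.e. lim_{σ → +∞} ∫_{2^{2/3}σ}^{∞} f_σ(z)² dz = 0. -/

import Mathlib

set_option maxHeartbeats 1000000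

open MeasureTheory Set Filter

/-- The bounding function
`f_σ(z) = exp( τ(2^{1/3}z − σ) − (2/3)(2^{1/3}z − (1 + 2^{−1/3})σ + 2^{−1/3}a)^{3/2} )`
dominating the off-diagonal kernel entries of the conditioned tacnode operator. -/
noncomputable def fBound (τ a σ z : ℝ) : ℝ :=
  Real.exp (τ * ((2 : ℝ) ^ ((1 : ℝ) / 3) * z - σ) -
    2 / 3 * ((2 : ℝ) ^ ((1 : ℝ) / 3) * z - (1 + (2 : ℝ) ^ (-(1 : ℝ) / 3)) * σ +
      (2 : ℝ) ^ (-(1 : ℝ) / 3) * a) ^ ((3 : ℝ) / 2))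


lemma integral_exp_neg_mul_Ioi' {b : ℝ} (hb : 0 < b) (c : ℝ) :
    ∫ x in Ioi c, Real.exp (-(b * x)) = Real.exp (-(b * c)) / b := by
  have h := integral_Ioi_of_hasDerivAt_of_tendsto'
    (f := fun x => -Real.exp (-(b * x)) / b) (f' := fun x => Real.exp (-(b * x))) (a := c)
    (m := 0) ?_ (by simpa [neg_mul] using exp_neg_integrableOn_Ioi c hb) ?_
  · rw [h]; ring
  · intro x _
    have h1 : HasDerivAt (fun x : ℝ => -(b * x)) (-b) x := by
      simpa [Pi.neg_def] using ((hasDerivAt_id x).const_mul b).neg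
    have := (h1.exp).neg.div_const b
    convert this using 1
    · rfl
    · rfl
    · field_simp
  · have h1 : Tendsto (fun x : ℝ => -(b * x)) atTop atBot := by
      exact tendsto_neg_atTop_atBot.comp (tendsto_id.const_mul_atTop hb)
    have := (Real.tendsto_exp_atBot.comp h1).neg.div_const b
    simpa using this

lemma exponent_le {τ σ s w m : ℝ} (hσ1 : 1 ≤ σ) (hs : σ ≤ s) (hm : 0 < m)
    (hwm : m * s ≤ w)
    (hτσ : τ + 1 ≤ 2 / 3 * m ^ ((3:ℝ)/2) * σ ^ ((1:ℝ)/2)) :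
    τ * s - 2 / 3 * w ^ ((3:ℝ)/2) ≤ -s := by
  have hσ0 : (0:ℝ) < σ := lt_of_lt_of_le one_pos hσ1
  have hs0 : (0:ℝ) < s := lt_of_lt_of_le hσ0 hs
  have hms_nonneg : 0 ≤ m * s := by positivity
  have h32 : (m * s) ^ ((3:ℝ)/2) ≤ w ^ ((3:ℝ)/2) :=
    Real.rpow_le_rpow hms_nonneg hwm (by norm_num)
  have hmul : (m * s) ^ ((3:ℝ)/2) = m ^ ((3:ℝ)/2) * s ^ ((3:ℝ)/2) :=
    Real.mul_rpow hm.le hs0.le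
  have hsplit : s ^ ((3:ℝ)/2) = s ^ ((1:ℝ)/2) * s := by
    rw [show (3:ℝ)/2 = 1/2 + 1 by norm_num, Real.rpow_add hs0, Real.rpow_one]
  have hσs : σ ^ ((1:ℝ)/2) ≤ s ^ ((1:ℝ)/2) :=
    Real.rpow_le_rpow hσ0.le hs (by norm_num)
  have hm32 : 0 ≤ m ^ ((3:ℝ)/2) := Real.rpow_nonneg hm.le _
  have h5 : 2 / 3 * m ^ ((3:ℝ)/2) * σ ^ ((1:ℝ)/2) * s ≤
      2 / 3 * m ^ ((3:ℝ)/2) * s ^ ((1:ℝ)/2) * s := by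
    have := mul_le_mul_of_nonneg_right hσs (by positivity : (0:ℝ) ≤ 2 / 3 * m ^ ((3:ℝ)/2) * s)
    nlinarith
  have h6 : (τ + 1) * s ≤ 2 / 3 * m ^ ((3:ℝ)/2) * σ ^ ((1:ℝ)/2) * s :=
    mul_le_mul_of_nonneg_right hτσ hs0.le
  have h7 : 2 / 3 * m ^ ((3:ℝ)/2) * s ^ ((1:ℝ)/2) * s = 2 / 3 * (m * s) ^ ((3:ℝ)/2) := by
    rw [hmul, hsplit]; ring
  nlinarith

lemma fBound_le (τ a σ : ℝ) (hσ1 : 1 ≤ σ)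
    (ha : |a| ≤ (1 - (2:ℝ) ^ (-(1:ℝ)/3)) / 2 * σ)
    (hτσ : τ + 1 ≤ 2 / 3 * (((1 - (2:ℝ) ^ (-(1:ℝ)/3)) / 2) ^ ((3:ℝ)/2)) * σ ^ ((1:ℝ)/2))
    {z : ℝ} (hz : (2:ℝ) ^ ((2:ℝ)/3) * σ ≤ z) :
    fBound τ a σ z ≤ Real.exp (σ - (2:ℝ) ^ ((1:ℝ)/3) * z) := by
  have hp_pos : (0:ℝ) < (2:ℝ) ^ ((1:ℝ)/3) := Real.rpow_pos_of_pos two_pos _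
  have hq_pos : (0:ℝ) < (2:ℝ) ^ (-(1:ℝ)/3) := Real.rpow_pos_of_pos two_pos _
  have hq_lt : (2:ℝ) ^ (-(1:ℝ)/3) < 1 := by
    have : (2:ℝ) ^ (-(1:ℝ)/3) < (2:ℝ) ^ (0:ℝ) :=
      Real.rpow_lt_rpow_of_exponent_lt one_lt_two (by norm_num)
    simpa using this
  have hpq2 : (2:ℝ) ^ ((1:ℝ)/3) * (2:ℝ) ^ ((2:ℝ)/3) = 2 := by
    rw [← Real.rpow_add two_pos]; norm_num
  have hσ0 : (0:ℝ) < σ := lt_of_lt_of_le one_pos hσ1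
  have hs : σ ≤ (2:ℝ) ^ ((1:ℝ)/3) * z - σ := by
    have h1 : (2:ℝ) ^ ((1:ℝ)/3) * ((2:ℝ) ^ ((2:ℝ)/3) * σ) ≤ (2:ℝ) ^ ((1:ℝ)/3) * z :=
      mul_le_mul_of_nonneg_left hz hp_pos.le
    rw [← mul_assoc, hpq2] at h1
    linarith
  set q : ℝ := (2:ℝ) ^ (-(1:ℝ)/3) with hqdef
  have hwm : (1 - q) / 2 * ((2:ℝ) ^ ((1:ℝ)/3) * z - σ) ≤
      (2:ℝ) ^ ((1:ℝ)/3) * z - (1 + q) * σ + q * a := by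
    have h1 : q * σ ≤ q * ((2:ℝ) ^ ((1:ℝ)/3) * z - σ) := mul_le_mul_of_nonneg_left hs hq_pos.le
    have h2 : -(q * |a|) ≤ q * a := by nlinarith [neg_abs_le a]
    have h3 : q * |a| ≤ |a| := by nlinarith [abs_nonneg a]
    have h4 : (1 - q) / 2 * σ ≤ (1 - q) / 2 * ((2:ℝ) ^ ((1:ℝ)/3) * z - σ) :=
      mul_le_mul_of_nonneg_left hs (by linarith)
    nlinarith
  have hE := exponent_le (τ := τ) hσ1 hs (by linarith : (0:ℝ) < (1 - q) / 2) hwm hτσ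
  unfold fBound
  rw [Real.exp_le_exp]
  rw [hqdef] at *
  linarith [hE]

/-- For fixed `τ > 0` and `a`, the squared `L²` norm of `f_σ` on `[2^{2/3}σ, ∞)` tends to
zero as `σ → +∞`. -/
theorem fBound_L2_norm_tendsto_zero (τ a : ℝ) (hτ : 0 < τ) :
    Tendsto (fun σ : ℝ => ∫ z in Ici ((2 : ℝ) ^ ((2 : ℝ) / 3) * σ), (fBound τ a σ z) ^ 2)
      atTop (nhds 0) := by
  have hp_pos : (0:ℝ) < (2:ℝ) ^ ((1:ℝ)/3) := Real.rpow_pos_of_pos two_pos _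
  have hq_lt : (2:ℝ) ^ (-(1:ℝ)/3) < 1 := by
    have : (2:ℝ) ^ (-(1:ℝ)/3) < (2:ℝ) ^ (0:ℝ) :=
      Real.rpow_lt_rpow_of_exponent_lt one_lt_two (by norm_num)
    simpa using this
  have hm_pos : (0:ℝ) < (1 - (2:ℝ) ^ (-(1:ℝ)/3)) / 2 := by linarith
  have hpq2 : (2:ℝ) ^ ((1:ℝ)/3) * (2:ℝ) ^ ((2:ℝ)/3) = 2 := by
    rw [← Real.rpow_add two_pos]; norm_num
  have hb_pos : (0:ℝ) < 2 * (2:ℝ) ^ ((1:ℝ)/3) := by positivity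
  -- the dominating sequence
  have hH : Tendsto (fun σ : ℝ => Real.exp (-(2 * σ)) / (2 * (2:ℝ) ^ ((1:ℝ)/3))) atTop (nhds 0) := by
    have h1 : Tendsto (fun σ : ℝ => 2 * σ) atTop atTop :=
      tendsto_id.const_mul_atTop two_pos
    have := (Real.tendsto_exp_neg_atTop_nhds_zero.comp h1).div_const (2 * (2:ℝ) ^ ((1:ℝ)/3))
    simpa using this
  refine tendsto_of_tendsto_of_tendsto_of_le_of_le' tendsto_const_nhds hH ?_ ?_
  · exact Eventually.of_forall fun σ => integral_nonneg fun z => sq_nonneg _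
  · have hA : Tendsto (fun σ : ℝ => (1 - (2:ℝ) ^ (-(1:ℝ)/3)) / 2 * σ) atTop atTop :=
      tendsto_id.const_mul_atTop hm_pos
    have hB : Tendsto (fun σ : ℝ =>
        2 / 3 * (((1 - (2:ℝ) ^ (-(1:ℝ)/3)) / 2) ^ ((3:ℝ)/2)) * σ ^ ((1:ℝ)/2)) atTop atTop := by
      have h1 : Tendsto (fun σ : ℝ => σ ^ ((1:ℝ)/2)) atTop atTop :=
        tendsto_rpow_atTop (by norm_num)
      exact h1.const_mul_atTop (by positivity)
    filter_upwards [eventually_ge_atTop 1, hA.eventually_ge_atTop |a|,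
      hB.eventually_ge_atTop (τ + 1)] with σ hσ1 ha hτσ
    -- pointwise bound on [c, ∞)
    have hpt : ∀ z ∈ Ici ((2:ℝ) ^ ((2:ℝ)/3) * σ), fBound τ a σ z ^ 2 ≤
        Real.exp (2 * σ) * Real.exp (-(2 * (2:ℝ) ^ ((1:ℝ)/3) * z)) := by
      intro z hz
      have h1 := fBound_le τ a σ hσ1 ha hτσ (mem_Ici.mp hz)
      have h0 : 0 ≤ fBound τ a σ z := (Real.exp_pos _).le
      calc fBound τ a σ z ^ 2 ≤ Real.exp (σ - (2:ℝ) ^ ((1:ℝ)/3) * z) ^ 2 := by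
            exact pow_le_pow_left₀ h0 h1 2
        _ = Real.exp (2 * σ) * Real.exp (-(2 * (2:ℝ) ^ ((1:ℝ)/3) * z)) := by
            rw [sq, ← Real.exp_add, ← Real.exp_add]; ring_nf
    -- integrability of the dominating function
    have h1 : IntegrableOn (fun z : ℝ => Real.exp (-(2 * (2:ℝ) ^ ((1:ℝ)/3) * z)))
        (Ioi ((2:ℝ) ^ ((2:ℝ)/3) * σ)) := by
      have h2 := exp_neg_integrableOn_Ioi ((2:ℝ) ^ ((2:ℝ)/3) * σ) hb_pos
      simpa [neg_mul] using h2
    have hgint : IntegrableOn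
        (fun z => Real.exp (2 * σ) * Real.exp (-(2 * (2:ℝ) ^ ((1:ℝ)/3) * z)))
        (Ici ((2:ℝ) ^ ((2:ℝ)/3) * σ)) := by
      rw [integrableOn_Ici_iff_integrableOn_Ioi]
      exact h1.const_mul _
    -- continuity hence measurability of fBound squared
    have hcont : Continuous fun z => fBound τ a σ z ^ 2 := by
      have hinner : Continuous fun z : ℝ =>
          ((2:ℝ) ^ ((1:ℝ)/3) * z - (1 + (2:ℝ) ^ (-(1:ℝ)/3)) * σ + (2:ℝ) ^ (-(1:ℝ)/3) * a) := by
        fun_prop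
      have hrpow : Continuous fun z : ℝ =>
          ((2:ℝ) ^ ((1:ℝ)/3) * z - (1 + (2:ℝ) ^ (-(1:ℝ)/3)) * σ + (2:ℝ) ^ (-(1:ℝ)/3) * a) ^ ((3:ℝ)/2) := by
        refine continuous_iff_continuousAt.mpr fun x => ?_
        exact (Real.continuousAt_rpow_const _ _ (Or.inr (by norm_num))).comp hinner.continuousAt
      unfold fBound
      fun_prop
    have hfint : IntegrableOn (fun z => fBound τ a σ z ^ 2) (Ici ((2:ℝ) ^ ((2:ℝ)/3) * σ)) := by
      refine hgint.mono' hcont.aestronglyMeasurable.restrict ?_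
      refine (ae_restrict_iff' measurableSet_Ici).2 (ae_of_all _ fun z hz => ?_)
      rw [Real.norm_eq_abs, abs_of_nonneg (sq_nonneg _)]
      exact hpt z hz
    have hmono := setIntegral_mono_on hfint hgint measurableSet_Ici hpt
    have hval : ∫ z in Ici ((2:ℝ) ^ ((2:ℝ)/3) * σ), Real.exp (2 * σ) * Real.exp (-(2 * (2:ℝ) ^ ((1:ℝ)/3) * z)) =
        Real.exp (-(2 * σ)) / (2 * (2:ℝ) ^ ((1:ℝ)/3)) := by
      rw [integral_Ici_eq_integral_Ioi, MeasureTheory.integral_const_mul]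
      have := integral_exp_neg_mul_Ioi' hb_pos ((2:ℝ) ^ ((2:ℝ)/3) * σ)
      simp only [mul_assoc] at this ⊢
      rw [this]
      have hc4 : 2 * ((2:ℝ) ^ ((1:ℝ)/3) * ((2:ℝ) ^ ((2:ℝ)/3) * σ)) = 4 * σ := by
        linear_combination 2 * σ * hpq2
      rw [hc4, mul_div_assoc', ← Real.exp_add]
      ring_nf
    rw [hval] at hmono
    exact hmono
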